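/- arXiv:1406.7274 — 3 statements merged into one kernel-verified Lean document; each statement's English description precedes it below -/
import Mathlib

section
/- The system A_i • X = 0 (i = 1,…,k), A_{k+1} • X = −1, X ⪰ 0 is infeasible, where for each i ≤ k+1 the matrix A_i has identity block I_{r_i} in rows/columns r_1+⋯+r_{i−1}+1 through r_1+⋯+r_i, zeros in the lower-right (n − r_1 − ⋯ − r_i)-block, arbitrary entries elsewhere in the first r_1+⋯+r_{i−1} rows/columns, with r_1,…,r_k > 0 and r_{k+1} ≥ 0. That is, no positive semidefinite X satisfies all k+1 equations. -/
open Finset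

lemma psd_diag_nonneg {n : ℕ} {X : Matrix (Fin n) (Fin n) ℝ} (hX : X.PosSemidef)
    (j : Fin n) : 0 ≤ X j j := by
  have := hX.dotProduct_mulVec_nonneg (Pi.single j 1)
  simpa [dotProduct, Matrix.mulVec, Pi.single_apply, Finset.sum_ite_eq',
    Finset.sum_ite_eq] using this

lemma psd_row_zero {n : ℕ} {X : Matrix (Fin n) (Fin n) ℝ} (hX : X.PosSemidef)
    {j : Fin n} (hj : X j j = 0) (l : Fin n) : X j l = 0 := by
  rcases eq_or_ne j l with rfl | hne
  · exact hj
  have hsym : X l j = X j l := by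
    have := congrFun (congrFun hX.1 j) l
    simpa [Matrix.conjTranspose_apply] using this
  by_contra hc
  set c := X j l with hcdef
  set t : ℝ := -(X l l + 1) / (2 * c) with ht
  set x : Fin n → ℝ := fun i => (if i = j then t else 0) + (if i = l then 1 else 0) with hx
  have := hX.dotProduct_mulVec_nonneg x
  have hval : dotProduct (star x) (X.mulVec x) = t * t * X j j + t * X j l + t * X l j + X l l := by
    simp only [dotProduct, Matrix.mulVec, hx, star_trivial]
    simp only [mul_add, add_mul, Finset.sum_add_distrib, ite_mul, mul_ite, one_mul, mul_one,
      zero_mul, mul_zero, Finset.sum_ite_eq', Finset.mul_sum, Finset.mem_univ, if_true]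
    ring
  rw [hval, hj, hsym] at this
  simp only [← hcdef] at this
  have h2tc : t * c = -(X l l + 1) / 2 := by
    rw [ht]; field_simp
  nlinarith [h2tc]

open Finset in
theorem staircase_system_infeasible (n k : ℕ) (r : ℕ → ℕ)
    (A : ℕ → Matrix (Fin n) (Fin n) ℝ)
    (hrpos : ∀ i < k, 0 < r i)
    (hsum : ∑ t ∈ Finset.range (k + 1), r t ≤ n)
    (hsymm : ∀ i ≤ k, (A i).IsSymm)
    (hdiag : ∀ i ≤ k, ∀ j : Fin n,
      ∑ t ∈ Finset.range i, r t ≤ (j : ℕ) →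
      (j : ℕ) < ∑ t ∈ Finset.range i, r t + r i → A i j j = 1)
    (hoff : ∀ i ≤ k, ∀ j l : Fin n, j ≠ l →
      ∑ t ∈ Finset.range i, r t ≤ (j : ℕ) →
      ∑ t ∈ Finset.range i, r t ≤ (l : ℕ) → A i j l = 0)
    (hlow : ∀ i ≤ k, ∀ j l : Fin n,
      ∑ t ∈ Finset.range i, r t + r i ≤ (j : ℕ) →
      ∑ t ∈ Finset.range i, r t + r i ≤ (l : ℕ) → A i j l = 0) :
    ¬ ∃ X : Matrix (Fin n) (Fin n) ℝ, X.PosSemidef ∧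
      (∀ i < k, Matrix.trace (A i * X) = 0) ∧
      Matrix.trace (A k * X) = -1 := by
  rintro ⟨X, hX, hX1, hX2⟩
  have hXsym : ∀ j l : Fin n, X l j = X j l := fun j l => by
    have := congrFun (congrFun hX.1 j) l
    simpa [Matrix.conjTranspose_apply] using this
  -- key trace computation
  have key : ∀ i ≤ k,
      (∀ j : Fin n, (j : ℕ) < ∑ t ∈ Finset.range i, r t → ∀ l, X j l = 0) →
      Matrix.trace (A i * X) =
        ∑ j : Fin n, (if (∑ t ∈ Finset.range i, r t ≤ (j : ℕ) ∧
            (j : ℕ) < ∑ t ∈ Finset.range i, r t + r i) then X j j else 0) := by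
    intro i hik hP
    set s := ∑ t ∈ Finset.range i, r t with hs
    rw [Matrix.trace]
    refine Finset.sum_congr rfl fun j _ => ?_
    rw [Matrix.diag_apply, Matrix.mul_apply]
    rw [Finset.sum_eq_single j]
    · rcases lt_or_ge (j : ℕ) s with hjs | hjs
      · have : X j j = 0 := hP j hjs j
        simp [this, lt_of_lt_of_le hjs (Nat.le_add_right _ _), not_le.mpr hjs]
      rcases lt_or_ge (j : ℕ) (s + r i) with hjr | hjr
      · rw [hdiag i hik j hjs hjr]
        simp [hjs, hjr]
      · rw [hlow i hik j j hjr hjr]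
        simp [not_lt.mpr hjr]
    · intro l _ hlj
      rcases lt_or_ge (l : ℕ) s with hls | hls
      · rw [hP l hls j, mul_zero]
      rcases lt_or_ge (j : ℕ) s with hjs | hjs
      · rw [hXsym j l, hP j hjs l, mul_zero]
      · rw [hoff i hik j l (Ne.symm hlj) hjs hls, zero_mul]
    · simp
  -- induction: the first s_i rows of X vanish
  have main : ∀ i ≤ k, ∀ j : Fin n, (j : ℕ) < ∑ t ∈ Finset.range i, r t →
      ∀ l, X j l = 0 := by
    intro i
    induction i with
    | zero => simp
    | succ i ih =>
      intro hik j hj l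
      have hik' : i ≤ k := Nat.le_of_succ_le hik
      have hP := ih hik'
      have htr := key i hik' hP
      rw [hX1 i (Nat.lt_of_succ_le hik)] at htr
      have hdiag0 : ∀ m : Fin n, (∑ t ∈ Finset.range i, r t ≤ (m : ℕ) ∧
          (m : ℕ) < ∑ t ∈ Finset.range i, r t + r i) → X m m = 0 := by
        have hnn : ∀ m : Fin n, 0 ≤ (if (∑ t ∈ Finset.range i, r t ≤ (m : ℕ) ∧
            (m : ℕ) < ∑ t ∈ Finset.range i, r t + r i) then X m m else 0) := by
          intro m
          split
          · exact psd_diag_nonneg hX m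
          · exact le_refl 0
        have := (Finset.sum_eq_zero_iff_of_nonneg (fun m _ => hnn m)).mp htr.symm
        intro m hm
        have := this m (Finset.mem_univ m)
        simpa [hm.1, hm.2] using this
      rw [Finset.sum_range_succ] at hj
      rcases lt_or_ge (j : ℕ) (∑ t ∈ Finset.range i, r t) with hjs | hjs
      · exact hP j hjs l
      · exact psd_row_zero hX (hdiag0 j ⟨hjs, hj⟩) l
  -- final contradiction
  have htr := key k le_rfl (main k le_rfl)
  rw [hX2] at htr
  have hnn : (0:ℝ) ≤ ∑ j : Fin n, (if (∑ t ∈ Finset.range k, r t ≤ (j : ℕ) ∧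
      (j : ℕ) < ∑ t ∈ Finset.range k, r t + r k) then X j j else 0) := by
    refine Finset.sum_nonneg fun m _ => ?_
    split
    · exact psd_diag_nonneg hX m
    · exact le_refl 0
  linarith
end

section
/- The example system is infeasible: there is no positive semidefinite 3×3 real matrix X with X₁₁ = 0 and 2·X₁₃ + X₂₂ = −1 (i.e. A₁ • X = 0 and A₂ • X = −1 where A₁ = E₁₁ and A₂ has ones in positions (1,3), (3,1), (2,2)). -/
theorem example_system_infeasible :
    ¬ ∃ X : Matrix (Fin 3) (Fin 3) ℝ, X.PosSemidef ∧
      Matrix.trace ((!![1,0,0; 0,0,0; 0,0,0] : Matrix (Fin 3) (Fin 3) ℝ) * X) = 0 ∧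
      Matrix.trace ((!![0,0,1; 0,1,0; 1,0,0] : Matrix (Fin 3) (Fin 3) ℝ) * X) = -1 := by
  rintro ⟨X, hX, h1, h2⟩
  have htr1 : X 0 0 = 0 := by
    simp [Matrix.trace, Matrix.mul_apply, Fin.sum_univ_three, Matrix.diag, Matrix.vecHead, Matrix.vecTail] at h1
    linarith
  have hsym : X 2 0 = X 0 2 := by
    have := hX.1.apply 0 2
    simpa using this
  have htr2 : 2 * X 0 2 + X 1 1 = -1 := by
    simp [Matrix.trace, Matrix.mul_apply, Fin.sum_univ_three, Matrix.diag, Matrix.vecHead, Matrix.vecTail, hsym] at h2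
    linarith
  have hq : ∀ t : ℝ, 0 ≤ 2 * t * X 0 2 + X 2 2 := by
    intro t
    have := hX.dotProduct_mulVec_nonneg ![t, 0, 1]
    simp [dotProduct, Matrix.mulVec, Fin.sum_univ_three, htr1, hsym] at this
    linarith
  have h02 : X 0 2 = 0 := by
    by_contra h
    have key : 2 * ((-X 2 2 - 1) / (2 * X 0 2)) * X 0 2 = -X 2 2 - 1 := by
      field_simp
    have := hq ((-X 2 2 - 1) / (2 * X 0 2))
    rw [key] at this
    linarith
  have h11 : 0 ≤ X 1 1 := by
    have := hX.dotProduct_mulVec_nonneg ![0, 1, 0]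
    simpa [dotProduct, Matrix.mulVec, Fin.sum_univ_three] using this
  rw [h02] at htr2
  linarith
end

section
/- A feasible solution certificate for maximum rank: if the system A_i • X = b_i (i=1,…,m), X ⪰ 0 contains among its constraints the staircase equations A_i • X = 0 (i=1,…,k) of Theorem 1.2 with r_1 + ⋯ + r_k = n − p, then every feasible X has rank at most p. -/
open Finset in
theorem rank_bound_from_staircase (n m k p : ℕ) (hk : k ≤ m)
    (r : ℕ → ℕ)
    (A : Fin m → Matrix (Fin n) (Fin n) ℝ) (b : Fin m → ℝ)
    (hrpos : ∀ i < k, 0 < r i)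
    (hsum : ∑ t ∈ Finset.range k, r t = n - p) (hp : p ≤ n)
    (hb : ∀ i : Fin m, (i : ℕ) < k → b i = 0)
    (hdiag : ∀ i : Fin m, (i : ℕ) < k → ∀ j : Fin n,
      ∑ t ∈ Finset.range (i : ℕ), r t ≤ (j : ℕ) →
      (j : ℕ) < ∑ t ∈ Finset.range (i : ℕ), r t + r i → A i j j = 1)
    (hoff : ∀ i : Fin m, (i : ℕ) < k → ∀ j l : Fin n, j ≠ l →
      ∑ t ∈ Finset.range (i : ℕ), r t ≤ (j : ℕ) →
      ∑ t ∈ Finset.range (i : ℕ), r t ≤ (l : ℕ) → A i j l = 0)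
    (hlow : ∀ i : Fin m, (i : ℕ) < k → ∀ j l : Fin n,
      ∑ t ∈ Finset.range (i : ℕ), r t + r i ≤ (j : ℕ) →
      ∑ t ∈ Finset.range (i : ℕ), r t + r i ≤ (l : ℕ) → A i j l = 0)
    (X : Matrix (Fin n) (Fin n) ℝ) (hX : X.PosSemidef)
    (hfeas : ∀ i, Matrix.trace (A i * X) = b i) :
    X.rank ≤ p := by
  classical
  -- symmetry
  have hsymm : ∀ j l : Fin n, X j l = X l j := by
    intro j l
    have := congrFun (congrFun hX.1 j) l
    simpa [Matrix.conjTranspose_apply] using this.symm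
  -- diagonal entries are nonnegative
  have hdnn : ∀ j : Fin n, 0 ≤ X j j := by
    intro j
    have := hX.dotProduct_mulVec_nonneg (Pi.single j 1)
    simpa [Matrix.mulVec_single_one, single_dotProduct] using this
  -- if a diagonal entry vanishes, the whole column (and row) vanishes
  have hzero : ∀ j : Fin n, X j j = 0 → ∀ l : Fin n, X l j = 0 := by
    intro j hjj l
    have h0 : dotProduct (star (Pi.single j 1 : Fin n → ℝ)) (X.mulVec (Pi.single j 1)) = 0 := by
      simpa [Matrix.mulVec_single_one, single_dotProduct] using hjj
    have := (hX.dotProduct_mulVec_zero_iff (Pi.single j 1)).mp h0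
    have := congrFun this l
    simpa [Matrix.mulVec_single_one] using this
  -- the diagonal vanishes up to each partial sum
  have hdz : ∀ i, i ≤ k → ∀ j : Fin n, (j : ℕ) < ∑ t ∈ Finset.range i, r t → X j j = 0 := by
    intro i
    induction i with
    | zero => intro _ j hj; simp at hj
    | succ i ih =>
      intro hik j hj
      have hik' : i < k := hik
      have ihk : i ≤ k := le_of_lt hik'
      set s : ℕ := ∑ t ∈ Finset.range i, r t with hs
      rw [Finset.sum_range_succ, ← hs] at hj
      by_cases hjs : (j : ℕ) < s
      · exact ih ihk j hjs
      -- use the i-th constraint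
      have him : i < m := lt_of_lt_of_le hik' hk
      set I : Fin m := ⟨i, him⟩ with hI
      have hIk : (I : ℕ) < k := hik'
      have htr : Matrix.trace (A I * X) = 0 := by rw [hfeas I, hb I hIk]
      -- columns/rows below s vanish
      have hcz : ∀ (a : Fin n), (a : ℕ) < s → ∀ b : Fin n, X a b = 0 ∧ X b a = 0 := by
        intro a ha b
        have haa : X a a = 0 := ih ihk a ha
        exact ⟨(hsymm a b).trans (hzero a haa b), hzero a haa b⟩
      -- evaluate the trace
      have htr' : Matrix.trace (A I * X)
          = ∑ j ∈ Finset.univ.filter (fun j : Fin n => s ≤ (j : ℕ) ∧ (j : ℕ) < s + r i), X j j := by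
        rw [Matrix.trace]
        have hterm : ∀ a : Fin n, Matrix.diag (A I * X) a
            = if s ≤ (a : ℕ) ∧ (a : ℕ) < s + r i then X a a else 0 := by
          intro a
          have hinner : Matrix.diag (A I * X) a = A I a a * X a a := by
            rw [Matrix.diag_apply, Matrix.mul_apply]
            refine Finset.sum_eq_single a ?_ (by simp)
            intro l _ hla
            by_cases hls : (l : ℕ) < s
            · rw [(hcz l hls a).1, mul_zero]
            by_cases has : (a : ℕ) < s
            · rw [(hcz a has l).2, mul_zero]
            · rw [hoff I hIk a l (Ne.symm hla) (not_lt.mp has) (not_lt.mp hls), zero_mul]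
          rw [hinner]
          by_cases has : (a : ℕ) < s
          · rw [ih ihk a has, mul_zero]
            simp [not_le.mpr has]
          by_cases har : (a : ℕ) < s + r i
          · rw [hdiag I hIk a (not_lt.mp has) har, one_mul]
            simp [not_lt.mp has, har]
          · rw [hlow I hIk a a (not_lt.mp har) (not_lt.mp har), zero_mul]
            simp [har]
        rw [Finset.sum_congr rfl (fun a _ => hterm a)]
        exact (Finset.sum_filter _ _).symm
      have hsum0 : ∑ j ∈ Finset.univ.filter (fun j : Fin n => s ≤ (j : ℕ) ∧ (j : ℕ) < s + r i),
          X j j = 0 := by rw [← htr', htr]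
      have hall := (Finset.sum_eq_zero_iff_of_nonneg (fun a _ => hdnn a)).mp hsum0
      exact hall j (by simp [not_lt.mp hjs, hj])
  -- hence the first n - p columns of X vanish
  have hcol : ∀ j : Fin n, (j : ℕ) < n - p → ∀ l : Fin n, X l j = 0 := by
    intro j hj l
    exact hzero j (hdz k le_rfl j (by rw [hsum]; exact hj)) l
  -- rank bound via column space
  rw [Matrix.rank, Matrix.range_mulVecLin]
  set f : Fin p → (Fin n → ℝ) :=
    fun t => X.transpose ⟨n - p + (t : ℕ), by have := t.isLt; omega⟩ with hf
  have hle : Submodule.span ℝ (Set.range X.transpose) ≤ Submodule.span ℝ (Set.range f) := by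
    rw [Submodule.span_le]
    rintro _ ⟨j, rfl⟩
    by_cases hj : (j : ℕ) < n - p
    · have : X.transpose j = 0 := funext fun l => hcol j hj l
      rw [this]; exact Submodule.zero_mem _
    · have hjp : (j : ℕ) - (n - p) < p := by omega
      have hge : n - p ≤ (j : ℕ) := not_lt.mp hj
      have : f ⟨(j : ℕ) - (n - p), hjp⟩ = X.transpose j := by
        exact congrArg X.transpose
          (Fin.ext (show n - p + ((j : ℕ) - (n - p)) = (j : ℕ) by omega))
      rw [← this]
      exact Submodule.subset_span ⟨_, rfl⟩
  calc Module.finrank ℝ (Submodule.span ℝ (Set.range X.transpose))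
      ≤ Module.finrank ℝ (Submodule.span ℝ (Set.range f)) := Submodule.finrank_mono hle
    _ ≤ Fintype.card (Fin p) := finrank_range_le_card f
    _ = p := Fintype.card_fin p
end
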